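/- Funk balls are convex: for any a ∈ interior C and ρ ∈ ℝ, the set {p ∈ interior C | F_C(a,p) ≤ ρ} is convex. -/

import Mathlib

noncomputable def funk {d : ℕ} (C : Set (Fin d → ℝ)) (a b : Fin d → ℝ) : ℝ :=
  Real.log (sInf {β : ℝ | β • b - a ∈ C})

theorem funk_ball_convex {d : ℕ} (C : Set (Fin d → ℝ))
    (hconv : Convex ℝ C) (hclosed : IsClosed C)
    (hcone : ∀ β : ℝ, 0 ≤ β → ∀ x ∈ C, β • x ∈ C)
    (hpointed : C ∩ (-C) ⊆ {0})
    (hint : (interior C).Nonempty)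
    (a : Fin d → ℝ) (ha : a ∈ interior C) (ρ : ℝ) :
    Convex ℝ {p | p ∈ interior C ∧ funk C a p ≤ ρ} := by
  rcases Nat.eq_zero_or_pos d with hd | hd
  · subst hd
    haveI : Subsingleton (Fin 0 → ℝ) := ⟨fun f g => funext fun i => i.elim0⟩
    intro x hx y hy t s ht hs hts
    have hxy : t • x + s • y = x := Subsingleton.elim _ _
    rw [hxy]; exact hx
  -- addition law for C
  have hadd : ∀ x ∈ C, ∀ y ∈ C, x + y ∈ C := by
    intro x hx y hy
    have h1 := hconv hx hy (by norm_num : (0:ℝ) ≤ 1/2) (by norm_num : (0:ℝ) ≤ 1/2)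
      (by norm_num)
    have h2 := hcone 2 (by norm_num) _ h1
    have : (2:ℝ) • ((1/2:ℝ) • x + (1/2:ℝ) • y) = x + y := by
      rw [smul_add, smul_smul, smul_smul]; norm_num
    rwa [this] at h2
  -- a ≠ 0
  have ha0 : a ≠ 0 := by
    intro h0
    set x : Fin d → ℝ := fun _ => (1:ℝ) with hxdef
    have hx0 : x ≠ 0 := by
      intro h
      have := congrFun h ⟨0, hd⟩
      simp [hxdef] at this
    have hc : Continuous (fun t : ℝ => t • x) := continuous_id.smul continuous_const
    have hmem : (fun t : ℝ => t • x) ⁻¹' (interior C) ∈ nhds (0:ℝ) := by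
      apply hc.continuousAt.preimage_mem_nhds
      rw [show (0:ℝ) • x = a by rw [h0, zero_smul]]
      exact isOpen_interior.mem_nhds ha
    obtain ⟨δ, hδ, hball⟩ := Metric.mem_nhds_iff.mp hmem
    have h1 : (δ/2) • x ∈ C := by
      apply interior_subset; apply hball
      rw [Metric.mem_ball, Real.dist_eq, sub_zero, abs_of_pos (by linarith)]
      linarith
    have h2 : (-(δ/2)) • x ∈ C := by
      apply interior_subset; apply hball
      rw [Metric.mem_ball, Real.dist_eq, sub_zero, abs_of_neg (by linarith)]
      linarith
    have h3 : (δ/2) • x ∈ C ∩ (-C) := ⟨h1, by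
      rw [Set.mem_neg, ← neg_smul]; exact h2⟩
    have h4 := hpointed h3
    simp only [Set.mem_singleton_iff, smul_eq_zero] at h4
    rcases h4 with h | h
    · linarith
    · exact hx0 h
  -- characterization of the ball
  have key : ∀ p ∈ interior C, (funk C a p ≤ ρ ↔ Real.exp ρ • p - a ∈ C) := by
    intro p hp
    set S : Set ℝ := {β : ℝ | β • p - a ∈ C} with hSdef
    have hSclosed : IsClosed S := by
      have : Continuous (fun β : ℝ => β • p - a) :=
        (continuous_id.smul continuous_const).sub continuous_const
      exact hclosed.preimage this
    have hSne : S.Nonempty := by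
      obtain ⟨ε, hε, hball⟩ := Metric.mem_nhds_iff.mp (isOpen_interior.mem_nhds hp)
      set β : ℝ := ‖a‖ / ε + 1 with hβdef
      have hβpos : 0 < β := by positivity
      have hmem : p - β⁻¹ • a ∈ C := by
        apply interior_subset; apply hball
        rw [Metric.mem_ball, dist_eq_norm]
        have : p - β⁻¹ • a - p = -(β⁻¹ • a) := by abel
        rw [this, norm_neg, norm_smul, Real.norm_eq_abs, abs_of_pos (by positivity)]
        rw [inv_mul_lt_iff₀ hβpos]
        have : ‖a‖ / ε < β := by rw [hβdef]; linarith
        calc ‖a‖ = ε * (‖a‖ / ε) := by field_simp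
        _ < ε * β := by exact mul_lt_mul_of_pos_left this hε
        _ = β * ε := mul_comm _ _
      have := hcone β hβpos.le _ hmem
      have heq : β • (p - β⁻¹ • a) = β • p - a := by
        rw [smul_sub, smul_smul, mul_inv_cancel₀ hβpos.ne', one_smul]
      rw [heq] at this
      exact ⟨β, this⟩
    have hpos : ∀ β ∈ S, 0 < β := by
      intro β hβ
      by_contra hneg
      push_neg at hneg
      have haC : a ∈ C := interior_subset ha
      have hmb : (-β) • p ∈ C := hcone (-β) (neg_nonneg.2 hneg) p (interior_subset hp)
      have hsum : a + (-β) • p ∈ C := hadd a haC _ hmb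
      have hmemneg : β • p - a ∈ (-C) := by
        rw [Set.mem_neg]
        have : -(β • p - a) = a + (-β) • p := by rw [neg_smul]; abel
        rwa [this]
      have h0 := hpointed ⟨hβ, hmemneg⟩
      simp only [Set.mem_singleton_iff, sub_eq_zero] at h0
      -- β • p = a
      have hnegA : -a ∈ C := by
        rw [← h0, ← neg_smul]; exact hmb
      have := hpointed ⟨haC, by rwa [Set.mem_neg]⟩
      exact ha0 this
    have hbdd : BddBelow S := ⟨0, fun β hβ => (hpos β hβ).le⟩
    have hmemInf : sInf S ∈ S := hSclosed.csInf_mem hSne hbdd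
    have hInfpos : 0 < sInf S := hpos _ hmemInf
    have hup : ∀ β ∈ S, ∀ γ, β ≤ γ → γ ∈ S := by
      intro β hβ γ hle
      have h1 : (γ - β) • p ∈ C := hcone _ (by linarith) p (interior_subset hp)
      have h2 := hadd _ hβ _ h1
      have : β • p - a + (γ - β) • p = γ • p - a := by
        rw [sub_smul]; abel
      rwa [this] at h2
    show Real.log (sInf S) ≤ ρ ↔ Real.exp ρ • p - a ∈ C
    rw [Real.log_le_iff_le_exp hInfpos]
    constructor
    · intro h; exact hup _ hmemInf _ h
    · intro h; exact csInf_le hbdd h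
  have hset : {p | p ∈ interior C ∧ funk C a p ≤ ρ}
      = {p | p ∈ interior C ∧ Real.exp ρ • p - a ∈ C} := by
    ext p
    simp only [Set.mem_setOf_eq]
    constructor
    · rintro ⟨h1, h2⟩; exact ⟨h1, (key p h1).mp h2⟩
    · rintro ⟨h1, h2⟩; exact ⟨h1, (key p h1).mpr h2⟩
  rw [hset]
  intro x hx y hy t s ht hs hts
  refine ⟨hconv.interior hx.1 hy.1 ht hs hts, ?_⟩
  have hcomb := hconv hx.2 hy.2 ht hs hts
  have heq : t • (Real.exp ρ • x - a) + s • (Real.exp ρ • y - a)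
      = Real.exp ρ • (t • x + s • y) - (t + s) • a := by
    module
  rw [heq, hts, one_smul] at hcomb
  exact hcomb
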